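/- Let p, q be probability densities and w a weight function with ∫pw ∈ (0,1) and ∫qw ∈ (0,1), such that x ↦ w(x)·q(x)·log q(x) is μ-integrable and x ↦ w(x)·q(x)·log p(x) is quasi-integrable with ∫ w·q·log p dμ < ∞. Then the censored likelihood rule is strictly locally proper: ∫_X S^{CSL}(p,x;w)·q(x) dμ(x) ≥ ∫_X S^{CSL}(q,x;w)·q(x) dμ(x) (in the extended reals), with equality if and only if p = q μ-a.e. on {w > 0}. -/

import Mathlib

open MeasureTheory
open scoped ENNReal

noncomputable section

/-- A probability density with respect to `μ`. -/
def IsDensity {X : Type*} [MeasurableSpace X] (μ : Measure X) (p : X → ℝ) : Prop :=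
  Measurable p ∧ (∀ x, 0 ≤ p x) ∧ ∫ x, p x ∂μ = 1

/-- A weight function: measurable with values in `[0,1]`. -/
def IsWeight {X : Type*} [MeasurableSpace X] (w : X → ℝ) : Prop :=
  Measurable w ∧ ∀ x, w x ∈ Set.Icc (0 : ℝ) 1

/-- The extended-real logarithm of a real number: `log r` for `r > 0`, and `−∞`
for `r ≤ 0`. -/
def elog (r : ℝ) : EReal := if r ≤ 0 then ⊥ else ((Real.log r : ℝ) : EReal)

/-- The positive part of an extended real, as an extended nonnegative real. -/
def epos (e : EReal) : ℝ≥0∞ := if e = ⊤ then ⊤ else ENNReal.ofReal e.toReal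

/-- The quasi-integral of an extended-real-valued function: positive part minus
negative part (each a lower Lebesgue integral). -/
def eintE {X : Type*} [MeasurableSpace X] (μ : Measure X) (f : X → EReal) : EReal :=
  ((∫⁻ x, epos (f x) ∂μ : ℝ≥0∞) : EReal) - ((∫⁻ x, epos (-f x) ∂μ : ℝ≥0∞) : EReal)

/-- The renormalized density `p_w(x) = w(x)·p(x) / ∫ p·w dμ`. -/
def renorm {X : Type*} [MeasurableSpace X] (μ : Measure X) (p w : X → ℝ) : X → ℝ :=
  fun x => w x * p x / ∫ y, p y * w y ∂μ

/-- The censored likelihood rule `S^CSL(p,x;w) = −w(x)·log p(x) − (1−w(x))·log(1−∫pw)`,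
with values in the extended reals (so that `−log p(x) = +∞` when `p(x) = 0`, and
`0·log 0 = 0`). -/
def SCSLe {X : Type*} [MeasurableSpace X] (μ : Measure X) (p w : X → ℝ) (x : X) : EReal :=
  -((w x : ℝ) : EReal) * elog (p x)
    + (((-(1 - w x) * Real.log (1 - ∫ y, p y * w y ∂μ) : ℝ)) : EReal)

section helpers

variable {X : Type*} [MeasurableSpace X] {μ : Measure X}

lemma epos_coe (r : ℝ) : epos ((r : ℝ) : EReal) = ENNReal.ofReal r := by
  simp [epos]

lemma epos_neg_coe (r : ℝ) : epos (-((r : ℝ) : EReal)) = ENNReal.ofReal (-r) := by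
  rw [← EReal.coe_neg]; exact epos_coe _

lemma epos_bot : epos (⊥ : EReal) = 0 := by simp [epos]

lemma epos_top : epos (⊤ : EReal) = ⊤ := if_pos rfl

lemma ereal_ennreal_coe_eq {a : ℝ≥0∞} (ha : a ≠ ⊤) :
    ((a : EReal)) = ((a.toReal : ℝ) : EReal) := by
  rw [← EReal.toReal_coe_ennreal]
  exact (EReal.coe_toReal (by simpa using ha) (by simp)).symm

lemma eintE_congr {f g : X → EReal} (h : f =ᵐ[μ] g) : eintE μ f = eintE μ g := by
  unfold eintE
  have h1 : (fun x => epos (f x)) =ᵐ[μ] fun x => epos (g x) := h.mono fun x hx => by dsimp only; rw [hx]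
  have h2 : (fun x => epos (-f x)) =ᵐ[μ] fun x => epos (-g x) := h.mono fun x hx => by dsimp only; rw [hx]
  rw [lintegral_congr_ae h1, lintegral_congr_ae h2]

lemma lint_ofReal_lt_top {g : X → ℝ} (hg : Integrable g μ) :
    ∫⁻ x, ENNReal.ofReal (g x) ∂μ < ⊤ := by
  refine lt_of_le_of_lt (lintegral_mono fun x => ?_) hg.2
  exact Real.ofReal_le_enorm _

lemma eintE_coe_integrable {r : X → ℝ} (hr : Integrable r μ) :
    eintE μ (fun x => ((r x : ℝ) : EReal)) = ((∫ x, r x ∂μ : ℝ) : EReal) := by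
  unfold eintE
  simp only [epos_coe, epos_neg_coe]
  have h1 : (∫⁻ x, ENNReal.ofReal (r x) ∂μ) ≠ ⊤ := (lint_ofReal_lt_top hr).ne
  have h2 : (∫⁻ x, ENNReal.ofReal (-r x) ∂μ) ≠ ⊤ := (lint_ofReal_lt_top hr.neg).ne
  rw [ereal_ennreal_coe_eq h1, ereal_ennreal_coe_eq h2, ← EReal.coe_sub,
    integral_eq_lintegral_pos_part_sub_lintegral_neg_part hr]

lemma eintE_eq_top {f : X → EReal} (h1 : ∫⁻ x, epos (f x) ∂μ = ⊤)
    (h2 : (∫⁻ x, epos (-f x) ∂μ) ≠ ⊤) : eintE μ f = ⊤ := by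
  unfold eintE
  rw [h1, ereal_ennreal_coe_eq h2, EReal.coe_ennreal_top, EReal.top_sub_coe]

lemma integrable_of_parts {r : X → ℝ} (hm : Measurable r)
    (h1 : (∫⁻ x, ENNReal.ofReal (r x) ∂μ) ≠ ⊤) (h2 : (∫⁻ x, ENNReal.ofReal (-r x) ∂μ) ≠ ⊤) :
    Integrable r μ := by
  refine ⟨hm.aestronglyMeasurable, ?_⟩
  rw [hasFiniteIntegral_def]
  have key : ∀ x, ‖r x‖ₑ = ENNReal.ofReal (r x) + ENNReal.ofReal (-r x) := by
    intro x
    rw [Real.enorm_eq_ofReal_abs]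
    rcases le_or_gt 0 (r x) with h | h
    · rw [abs_of_nonneg h, ENNReal.ofReal_of_nonpos (neg_nonpos.mpr h), add_zero]
    · rw [abs_of_neg h, ENNReal.ofReal_of_nonpos h.le, zero_add]
  rw [lintegral_congr key, lintegral_add_left hm.ennreal_ofReal]
  exact ENNReal.add_lt_top.mpr ⟨h1.lt_top, h2.lt_top⟩

lemma key_le {a b : ℝ} (ha : 0 < a) (hb : 0 < b) :
    a - b ≤ a * (Real.log a - Real.log b) := by
  have h := Real.log_le_sub_one_of_pos (div_pos hb ha)
  rw [Real.log_div hb.ne' ha.ne'] at h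
  have := mul_le_mul_of_nonneg_left h ha.le
  rw [mul_sub] at this
  have hba : a * (b / a) = b := by field_simp
  nlinarith

lemma key_lt {a b : ℝ} (ha : 0 < a) (hb : 0 < b) (hne : a ≠ b) :
    a - b < a * (Real.log a - Real.log b) := by
  have h := Real.log_lt_sub_one_of_pos (div_pos hb ha) (by
    intro hc
    exact hne ((div_eq_one_iff_eq ha.ne').mp hc).symm)
  rw [Real.log_div hb.ne' ha.ne'] at h
  have := mul_lt_mul_of_pos_left h ha
  have hba : a * (b / a) = b := by field_simp
  nlinarith

end helpers

lemma core_real {X : Type*} [MeasurableSpace X] (μ : Measure X) (p q w : X → ℝ)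
    (hp0 : ∀ x, 0 ≤ p x) (hq0 : ∀ x, 0 ≤ q x) (hw01 : ∀ x, w x ∈ Set.Icc (0:ℝ) 1)
    (A B : ℝ)
    (hAdef : A = ∫ y, p y * w y ∂μ) (hBdef : B = ∫ y, q y * w y ∂μ)
    (hA0 : 0 < A) (hA1 : A < 1) (hB0 : 0 < B) (hB1 : B < 1)
    (hq_int : Integrable q μ) (hq1 : ∫ x, q x ∂μ = 1)
    (hwq_int : Integrable (fun x => w x * q x) μ)
    (hwp_int : Integrable (fun x => w x * p x) μ)
    (hqq : Integrable (fun x => w x * q x * Real.log (q x)) μ)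
    (hrp_int : Integrable (fun x => (-(w x) * Real.log (p x) + (-(1 - w x) * Real.log (1 - A))) * q x) μ)
    (hrq_int : Integrable (fun x => (-(w x) * Real.log (q x) + (-(1 - w x) * Real.log (1 - B))) * q x) μ)
    (hN : ∀ᵐ x ∂μ, ¬(0 < q x ∧ 0 < w x ∧ p x ≤ 0)) :
    (∫ x, (-(w x) * Real.log (q x) + (-(1 - w x) * Real.log (1 - B))) * q x ∂μ
      ≤ ∫ x, (-(w x) * Real.log (p x) + (-(1 - w x) * Real.log (1 - A))) * q x ∂μ) ∧
    ((∫ x, (-(w x) * Real.log (p x) + (-(1 - w x) * Real.log (1 - A))) * q x ∂μ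
      = ∫ x, (-(w x) * Real.log (q x) + (-(1 - w x) * Real.log (1 - B))) * q x ∂μ)
      ↔ ∀ᵐ x ∂μ, 0 < w x → p x = q x) := by
  have hIwq : ∫ x, w x * q x ∂μ = B := by
    rw [hBdef]
    exact integral_congr_ae (Filter.Eventually.of_forall fun x => mul_comm _ _)
  have hIwp : ∫ x, w x * p x ∂μ = A := by
    rw [hAdef]
    exact integral_congr_ae (Filter.Eventually.of_forall fun x => mul_comm _ _)
  have h_wqlogp_int : Integrable (fun x => w x * q x * Real.log (p x)) μ := by
    have hid : (fun x => w x * q x * Real.log (p x))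
        = fun x => -((-(w x) * Real.log (p x) + (-(1 - w x) * Real.log (1 - A))) * q x)
            + ((-(Real.log (1 - A))) * q x + Real.log (1 - A) * (w x * q x)) := by
      funext x; ring
    rw [hid]
    exact hrp_int.neg.add ((hq_int.const_mul _).add (hwq_int.const_mul _))
  set Cp := ∫ x, w x * q x * Real.log (p x) ∂μ with hCp
  set Cq := ∫ x, w x * q x * Real.log (q x) ∂μ with hCq
  have h_int_rp : ∫ x, (-(w x) * Real.log (p x) + (-(1 - w x) * Real.log (1 - A))) * q x ∂μ
      = -Cp - Real.log (1 - A) * (1 - B) := by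
    have hid : (fun x => (-(w x) * Real.log (p x) + (-(1 - w x) * Real.log (1 - A))) * q x)
        = fun x => -(w x * q x * Real.log (p x))
            + ((-(Real.log (1 - A))) * q x + Real.log (1 - A) * (w x * q x)) := by
      funext x; ring
    have ha1 : Integrable (fun x => -(w x * q x * Real.log (p x))) μ := h_wqlogp_int.neg
    have ha2 : Integrable (fun x => -Real.log (1 - A) * q x) μ := hq_int.const_mul _
    have ha3 : Integrable (fun x => Real.log (1 - A) * (w x * q x)) μ := hwq_int.const_mul _
    have ha4 : Integrable (fun x => -Real.log (1 - A) * q x + Real.log (1 - A) * (w x * q x)) μ :=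
      ha2.add ha3
    rw [hid, integral_add ha1 ha4, integral_add ha2 ha3,
      integral_neg, integral_const_mul, integral_const_mul, hq1, hIwq, ← hCp]
    ring
  have h_int_rq : ∫ x, (-(w x) * Real.log (q x) + (-(1 - w x) * Real.log (1 - B))) * q x ∂μ
      = -Cq - Real.log (1 - B) * (1 - B) := by
    have hid : (fun x => (-(w x) * Real.log (q x) + (-(1 - w x) * Real.log (1 - B))) * q x)
        = fun x => -(w x * q x * Real.log (q x))
            + ((-(Real.log (1 - B))) * q x + Real.log (1 - B) * (w x * q x)) := by
      funext x; ring
    have ha1 : Integrable (fun x => -(w x * q x * Real.log (q x))) μ := hqq.neg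
    have ha2 : Integrable (fun x => -Real.log (1 - B) * q x) μ := hq_int.const_mul _
    have ha3 : Integrable (fun x => Real.log (1 - B) * (w x * q x)) μ := hwq_int.const_mul _
    have ha4 : Integrable (fun x => -Real.log (1 - B) * q x + Real.log (1 - B) * (w x * q x)) μ :=
      ha2.add ha3
    rw [hid, integral_add ha1 ha4, integral_add ha2 ha3,
      integral_neg, integral_const_mul, integral_const_mul, hq1, hIwq, ← hCq]
    ring
  have hGkey : ∀ x, 0 < w x → 0 < q x → 0 < p x →
      w x * q x * Real.log (q x) - w x * q x * Real.log (p x)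
        + (Real.log A - Real.log B) * (w x * q x) - w x * q x + B / A * (w x * p x)
      = (w x * q x) * (Real.log (w x * q x) - Real.log (B / A * (w x * p x)))
        - ((w x * q x) - B / A * (w x * p x)) := by
    intro x hw' hq' hp'
    rw [Real.log_mul hw'.ne' hq'.ne',
        Real.log_mul (div_pos hB0 hA0).ne' (mul_pos hw' hp').ne',
        Real.log_div hB0.ne' hA0.ne', Real.log_mul hw'.ne' hp'.ne']
    ring
  have hG_int : Integrable (fun x => w x * q x * Real.log (q x) - w x * q x * Real.log (p x)
      + (Real.log A - Real.log B) * (w x * q x) - w x * q x + B / A * (w x * p x)) μ :=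
    (((hqq.sub h_wqlogp_int).add (hwq_int.const_mul _)).sub hwq_int).add (hwp_int.const_mul _)
  have h_int_G : ∫ x, (w x * q x * Real.log (q x) - w x * q x * Real.log (p x)
      + (Real.log A - Real.log B) * (w x * q x) - w x * q x + B / A * (w x * p x)) ∂μ
      = Cq - Cp + (Real.log A - Real.log B) * B := by
    have hb1 : Integrable (fun x => w x * q x * Real.log (q x) - w x * q x * Real.log (p x)) μ :=
      hqq.sub h_wqlogp_int
    have hb1' : Integrable (fun x => (Real.log A - Real.log B) * (w x * q x)) μ :=
      hwq_int.const_mul _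
    have hb2 : Integrable (fun x => w x * q x * Real.log (q x) - w x * q x * Real.log (p x)
        + (Real.log A - Real.log B) * (w x * q x)) μ := hb1.add hb1'
    have hb3 : Integrable (fun x => w x * q x * Real.log (q x) - w x * q x * Real.log (p x)
        + (Real.log A - Real.log B) * (w x * q x) - w x * q x) μ := hb2.sub hwq_int
    have hb4 : Integrable (fun x => B / A * (w x * p x)) μ := hwp_int.const_mul _
    rw [integral_add hb3 hb4, integral_sub hb2 hwq_int, integral_add hb1 hb1',
      integral_sub hqq h_wqlogp_int,
      integral_const_mul, integral_const_mul, hIwq, hIwp, ← hCp, ← hCq,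
      div_mul_cancel₀ B hA0.ne']
    ring
  have hG_nonneg : ∀ᵐ x ∂μ, 0 ≤ w x * q x * Real.log (q x) - w x * q x * Real.log (p x)
      + (Real.log A - Real.log B) * (w x * q x) - w x * q x + B / A * (w x * p x) := by
    filter_upwards [hN] with x hx
    rcases (mul_nonneg (hw01 x).1 (hq0 x)).eq_or_lt with h0 | hpos
    · have h0' : w x * q x = 0 := h0.symm
      rw [h0']
      have hb : 0 ≤ B / A * (w x * p x) :=
        mul_nonneg (div_pos hB0 hA0).le (mul_nonneg (hw01 x).1 (hp0 x))
      simpa using hb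
    · have hw' : 0 < w x := by
        rcases mul_pos_iff.mp hpos with ⟨h1, _⟩ | ⟨h1, _⟩
        · exact h1
        · linarith [(hw01 x).1]
      have hq' : 0 < q x := by
        rcases mul_pos_iff.mp hpos with ⟨_, h1⟩ | ⟨_, h1⟩
        · exact h1
        · linarith [hq0 x]
      have hp' : 0 < p x := by
        by_contra hc
        exact hx ⟨hq', hw', not_lt.mp hc⟩
      rw [hGkey x hw' hq' hp']
      have hb : 0 < B / A * (w x * p x) := mul_pos (div_pos hB0 hA0) (mul_pos hw' hp')
      linarith [key_le hpos hb]
  have hGint_nonneg : 0 ≤ ∫ x, (w x * q x * Real.log (q x) - w x * q x * Real.log (p x)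
      + (Real.log A - Real.log B) * (w x * q x) - w x * q x + B / A * (w x * p x)) ∂μ :=
    integral_nonneg_of_ae hG_nonneg
  have hd1 := key_le hB0 hA0
  have hd2 := key_le (show (0:ℝ) < 1 - B by linarith) (show (0:ℝ) < 1 - A by linarith)
  constructor
  · rw [h_int_rp, h_int_rq]
    rw [h_int_G] at hGint_nonneg
    linarith
  · constructor
    · intro heq
      rw [h_int_rp, h_int_rq] at heq
      have hG0 : ∫ x, (w x * q x * Real.log (q x) - w x * q x * Real.log (p x)
          + (Real.log A - Real.log B) * (w x * q x) - w x * q x + B / A * (w x * p x)) ∂μ = 0 := by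
        rw [h_int_G]
        rw [h_int_G] at hGint_nonneg
        linarith
      have hABeq : A = B := by
        by_contra hne
        have h1 := key_lt hB0 hA0 (fun hc => hne hc.symm)
        have h2 := key_lt (show (0:ℝ) < 1 - B by linarith) (show (0:ℝ) < 1 - A by linarith)
          (by intro hc; apply hne; linarith)
        rw [h_int_G] at hG0
        linarith
      have hBA1 : B / A = 1 := by rw [hABeq, div_self hB0.ne']
      have hG_ae := (integral_eq_zero_iff_of_nonneg_ae hG_nonneg hG_int).mp hG0
      filter_upwards [hG_ae, hN] with x hGx hx hwpos
      simp only [Pi.zero_apply] at hGx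
      rcases (hq0 x).eq_or_lt with hq0' | hq'
      · have hwq0 : w x * q x = 0 := by rw [← hq0', mul_zero]
        rw [hwq0] at hGx
        have hwp0 : w x * p x = 0 := by
          rw [hBA1, one_mul] at hGx
          linear_combination hGx
        rcases mul_eq_zero.mp hwp0 with h | h
        · exact absurd h hwpos.ne'
        · rw [h, ← hq0']
      · have hwq : 0 < w x * q x := mul_pos hwpos hq'
        have hp' : 0 < p x := by
          by_contra hc
          exact hx ⟨hq', hwpos, not_lt.mp hc⟩
        have hb : 0 < B / A * (w x * p x) := mul_pos (div_pos hB0 hA0) (mul_pos hwpos hp')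
        rw [hGkey x hwpos hq' hp'] at hGx
        by_contra hne
        have hab : w x * q x ≠ B / A * (w x * p x) := by
          rw [hBA1, one_mul]
          intro hc
          exact hne (mul_left_cancel₀ hwpos.ne' hc).symm
        have := key_lt hwq hb hab
        linarith
    · intro h
      apply integral_congr_ae
      have hABeq : A = B := by
        rw [hAdef, hBdef]
        apply integral_congr_ae
        filter_upwards [h] with x hx
        rcases (hw01 x).1.eq_or_lt with hw0 | hw0
        · rw [← hw0, mul_zero, mul_zero]
        · rw [hx hw0]
      filter_upwards [h] with x hx
      rcases (hw01 x).1.eq_or_lt with hw0 | hw0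
      · rw [hABeq, ← hw0]; ring
      · rw [hx hw0, hABeq]

lemma scsl_coe {X : Type*} [MeasurableSpace X] (μ : Measure X) (p w q : X → ℝ) (x : X)
    (h : q x = 0 ∨ w x = 0 ∨ 0 < p x) :
    SCSLe μ p w x * ((q x : ℝ) : EReal)
      = (((-(w x) * Real.log (p x) + (-(1 - w x) * Real.log (1 - ∫ y, p y * w y ∂μ))) * q x : ℝ) : EReal) := by
  rcases h with h | h | h
  · rw [h]
    simp
  · rw [SCSLe, h]
    norm_num
  · rw [SCSLe, elog, if_neg (not_le.mpr h)]
    norm_cast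

lemma scsl_top {X : Type*} [MeasurableSpace X] (μ : Measure X) (p w q : X → ℝ) (x : X)
    (hqx : 0 < q x) (hwx : 0 < w x) (hpx : p x ≤ 0) :
    SCSLe μ p w x * ((q x : ℝ) : EReal) = ⊤ := by
  rw [SCSLe, elog, if_pos hpx, ← EReal.coe_neg,
    EReal.coe_mul_bot_of_neg (neg_neg_of_pos hwx), EReal.top_add_coe,
    EReal.top_mul_coe_of_pos hqx]

/-- The censored likelihood rule is strictly locally proper:
the expected score of `p` under `q` is at least that of `q`, with equality iff
`p = q` μ-a.e. on `{w > 0}`. -/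
theorem SCSL_strictly_locally_proper
    {X : Type*} [MeasurableSpace X] (μ : Measure X) [SigmaFinite μ]
    (p q w : X → ℝ) (hp : IsDensity μ p) (hq : IsDensity μ q) (hw : IsWeight w)
    (hpw : (∫ y, p y * w y ∂μ) ∈ Set.Ioo (0 : ℝ) 1)
    (hqw : (∫ y, q y * w y ∂μ) ∈ Set.Ioo (0 : ℝ) 1)
    (hqq : Integrable (fun x => w x * q x * Real.log (q x)) μ)
    (hqp : Integrable (fun x => max (w x * q x * Real.log (p x)) 0) μ) :
    eintE μ (fun x => SCSLe μ q w x * ((q x : ℝ) : EReal))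
        ≤ eintE μ (fun x => SCSLe μ p w x * ((q x : ℝ) : EReal)) ∧
    (eintE μ (fun x => SCSLe μ p w x * ((q x : ℝ) : EReal))
        = eintE μ (fun x => SCSLe μ q w x * ((q x : ℝ) : EReal))
      ↔ ∀ᵐ x ∂μ, 0 < w x → p x = q x) := by
  obtain ⟨hpm, hp0, hp1⟩ := hp
  obtain ⟨hqm, hq0, hq1⟩ := hq
  obtain ⟨hwm, hw01⟩ := hw
  obtain ⟨hA0, hA1⟩ := hpw
  obtain ⟨hB0, hB1⟩ := hqw
  have hq_int : Integrable q μ := by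
    by_contra hni
    rw [integral_undef hni] at hq1
    norm_num at hq1
  have hp_int : Integrable p μ := by
    by_contra hni
    rw [integral_undef hni] at hp1
    norm_num at hp1
  have hwq_int : Integrable (fun x => w x * q x) μ := by
    refine hq_int.mono ((hwm.mul hqm).aestronglyMeasurable) (Filter.Eventually.of_forall fun x => ?_)
    rw [Real.norm_eq_abs, Real.norm_eq_abs, abs_of_nonneg (mul_nonneg (hw01 x).1 (hq0 x)),
      abs_of_nonneg (hq0 x)]
    exact mul_le_of_le_one_left (hq0 x) (hw01 x).2
  have hwp_int : Integrable (fun x => w x * p x) μ := by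
    refine hp_int.mono ((hwm.mul hpm).aestronglyMeasurable) (Filter.Eventually.of_forall fun x => ?_)
    rw [Real.norm_eq_abs, Real.norm_eq_abs, abs_of_nonneg (mul_nonneg (hw01 x).1 (hp0 x)),
      abs_of_nonneg (hp0 x)]
    exact mul_le_of_le_one_left (hp0 x) (hw01 x).2
  have hrpm : Measurable (fun x =>
      (-(w x) * Real.log (p x) + (-(1 - w x) * Real.log (1 - ∫ y, p y * w y ∂μ))) * q x) :=
    ((hwm.neg.mul hpm.log).add (((measurable_const.sub hwm).neg).mul_const _)).mul hqm
  have hrq_int : Integrable (fun x =>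
      (-(w x) * Real.log (q x) + (-(1 - w x) * Real.log (1 - ∫ y, q y * w y ∂μ))) * q x) μ := by
    have hid : (fun x =>
        (-(w x) * Real.log (q x) + (-(1 - w x) * Real.log (1 - ∫ y, q y * w y ∂μ))) * q x)
        = fun x => -(w x * q x * Real.log (q x))
            + (-Real.log (1 - ∫ y, q y * w y ∂μ) * q x
              + Real.log (1 - ∫ y, q y * w y ∂μ) * (w x * q x)) := by
      funext x; ring
    rw [hid]
    exact hqq.neg.add ((hq_int.const_mul _).add (hwq_int.const_mul _))
  have hfq_eq : eintE μ (fun x => SCSLe μ q w x * ((q x : ℝ) : EReal))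
      = ((∫ x, (-(w x) * Real.log (q x)
          + (-(1 - w x) * Real.log (1 - ∫ y, q y * w y ∂μ))) * q x ∂μ : ℝ) : EReal) := by
    have hpt : (fun x => SCSLe μ q w x * ((q x : ℝ) : EReal))
        = fun x => (((-(w x) * Real.log (q x)
            + (-(1 - w x) * Real.log (1 - ∫ y, q y * w y ∂μ))) * q x : ℝ) : EReal) := by
      funext x
      rcases (hq0 x).eq_or_lt with h | h
      · exact scsl_coe μ q w q x (Or.inl h.symm)
      · exact scsl_coe μ q w q x (Or.inr (Or.inr h))
    rw [hpt]
    exact eintE_coe_integrable hrq_int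
  have hdom_int : Integrable (fun x => max (w x * q x * Real.log (p x)) 0
      + |Real.log (1 - ∫ y, p y * w y ∂μ)| * q x) μ := hqp.add (hq_int.const_mul _)
  have hneg_bound : ∀ x, epos (-(SCSLe μ p w x * ((q x : ℝ) : EReal)))
      ≤ ENNReal.ofReal (max (w x * q x * Real.log (p x)) 0
        + |Real.log (1 - ∫ y, p y * w y ∂μ)| * q x) := by
    intro x
    by_cases hcase : q x = 0 ∨ w x = 0 ∨ 0 < p x
    · rw [scsl_coe μ p w q x hcase, epos_neg_coe]
      apply ENNReal.ofReal_le_ofReal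
      have hexp : -((-(w x) * Real.log (p x)
            + (-(1 - w x) * Real.log (1 - ∫ y, p y * w y ∂μ))) * q x)
          = w x * q x * Real.log (p x)
            + (1 - w x) * Real.log (1 - ∫ y, p y * w y ∂μ) * q x := by ring
      rw [hexp]
      have h2 : w x * q x * Real.log (p x) ≤ max (w x * q x * Real.log (p x)) 0 := le_max_left _ _
      have h3 : (1 - w x) * Real.log (1 - ∫ y, p y * w y ∂μ) * q x
          ≤ |Real.log (1 - ∫ y, p y * w y ∂μ)| * q x := by
        apply mul_le_mul_of_nonneg_right _ (hq0 x)
        calc (1 - w x) * Real.log (1 - ∫ y, p y * w y ∂μ)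
            ≤ (1 - w x) * |Real.log (1 - ∫ y, p y * w y ∂μ)| :=
              mul_le_mul_of_nonneg_left (le_abs_self _) (by linarith [(hw01 x).2])
          _ ≤ 1 * |Real.log (1 - ∫ y, p y * w y ∂μ)| :=
              mul_le_mul_of_nonneg_right (by linarith [(hw01 x).1]) (abs_nonneg _)
          _ = _ := one_mul _
      linarith
    · push_neg at hcase
      obtain ⟨h1, h2, h3⟩ := hcase
      rw [scsl_top μ p w q x ((hq0 x).lt_of_ne (Ne.symm h1)) ((hw01 x).1.lt_of_ne (Ne.symm h2)) h3]
      simp [epos]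
  have hnegp_fin : (∫⁻ x, epos (-(SCSLe μ p w x * ((q x : ℝ) : EReal))) ∂μ) ≠ ⊤ :=
    ((lintegral_mono hneg_bound).trans_lt (lint_ofReal_lt_top hdom_int)).ne
  set N : Set X := {x | 0 < q x} ∩ ({x | 0 < w x} ∩ {x | p x ≤ 0}) with hNdef
  have hNmeas : MeasurableSet N :=
    (measurableSet_lt measurable_const hqm).inter
      ((measurableSet_lt measurable_const hwm).inter (measurableSet_le hpm measurable_const))
  have hmemN : ∀ x, x ∈ N ↔ (0 < q x ∧ 0 < w x ∧ p x ≤ 0) := by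
    intro x
    simp [hNdef, Set.mem_inter_iff, Set.mem_setOf_eq]
  have haeN_of : (∀ᵐ x ∂μ, 0 < w x → p x = q x) → μ N = 0 := by
    intro h
    refine measure_eq_zero_iff_ae_notMem.mpr (h.mono fun x hx hmem => ?_)
    obtain ⟨h1, h2, h3⟩ := (hmemN x).mp hmem
    have := hx h2
    linarith
  have hrp_rq_of : (∀ᵐ x ∂μ, 0 < w x → p x = q x) →
      (fun x => (-(w x) * Real.log (p x)
        + (-(1 - w x) * Real.log (1 - ∫ y, p y * w y ∂μ))) * q x)
      =ᵐ[μ] (fun x => (-(w x) * Real.log (q x)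
        + (-(1 - w x) * Real.log (1 - ∫ y, q y * w y ∂μ))) * q x) := by
    intro h
    have hABeq : (∫ y, p y * w y ∂μ) = ∫ y, q y * w y ∂μ := by
      apply integral_congr_ae
      filter_upwards [h] with x hx
      rcases (hw01 x).1.eq_or_lt with hw0 | hw0
      · rw [← hw0, mul_zero, mul_zero]
      · rw [hx hw0]
    filter_upwards [h] with x hx
    rcases (hw01 x).1.eq_or_lt with hw0 | hw0
    · rw [hABeq, ← hw0]; ring
    · rw [hx hw0, hABeq]
  by_cases hN : μ N = 0
  · have haefp : (fun x => SCSLe μ p w x * ((q x : ℝ) : EReal))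
        =ᵐ[μ] fun x => (((-(w x) * Real.log (p x)
          + (-(1 - w x) * Real.log (1 - ∫ y, p y * w y ∂μ))) * q x : ℝ) : EReal) := by
      filter_upwards [measure_eq_zero_iff_ae_notMem.mp hN] with x hx
      apply scsl_coe
      rcases (hq0 x).eq_or_lt with h | h
      · exact Or.inl h.symm
      rcases (hw01 x).1.eq_or_lt with h2 | h2
      · exact Or.inr (Or.inl h2.symm)
      · refine Or.inr (Or.inr ?_)
        by_contra hc
        exact hx ((hmemN x).mpr ⟨h, h2, not_lt.mp hc⟩)
    have hpos_eq : ∫⁻ x, epos (SCSLe μ p w x * ((q x : ℝ) : EReal)) ∂μ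
        = ∫⁻ x, ENNReal.ofReal ((-(w x) * Real.log (p x)
          + (-(1 - w x) * Real.log (1 - ∫ y, p y * w y ∂μ))) * q x) ∂μ := by
      apply lintegral_congr_ae
      filter_upwards [haefp] with x hx
      rw [hx, epos_coe]
    have hneg_eq : ∫⁻ x, epos (-(SCSLe μ p w x * ((q x : ℝ) : EReal))) ∂μ
        = ∫⁻ x, ENNReal.ofReal (-((-(w x) * Real.log (p x)
          + (-(1 - w x) * Real.log (1 - ∫ y, p y * w y ∂μ))) * q x)) ∂μ := by
      apply lintegral_congr_ae
      filter_upwards [haefp] with x hx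
      rw [hx, epos_neg_coe]
    by_cases hPos : (∫⁻ x, ENNReal.ofReal ((-(w x) * Real.log (p x)
        + (-(1 - w x) * Real.log (1 - ∫ y, p y * w y ∂μ))) * q x) ∂μ) = ⊤
    · have htop : eintE μ (fun x => SCSLe μ p w x * ((q x : ℝ) : EReal)) = ⊤ :=
        eintE_eq_top (hpos_eq.trans hPos) hnegp_fin
      constructor
      · rw [hfq_eq, htop]; exact le_top
      · rw [htop, hfq_eq]
        constructor
        · intro hc
          exact absurd hc.symm (EReal.coe_ne_top _)
        · intro h
          exfalso
          have heq2 : (∫⁻ x, ENNReal.ofReal ((-(w x) * Real.log (p x)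
              + (-(1 - w x) * Real.log (1 - ∫ y, p y * w y ∂μ))) * q x) ∂μ)
              = ∫⁻ x, ENNReal.ofReal ((-(w x) * Real.log (q x)
              + (-(1 - w x) * Real.log (1 - ∫ y, q y * w y ∂μ))) * q x) ∂μ := by
            apply lintegral_congr_ae
            filter_upwards [hrp_rq_of h] with x hx
            rw [hx]
          rw [heq2] at hPos
          exact absurd hPos (lint_ofReal_lt_top hrq_int).ne
    · have hrp_int : Integrable (fun x => (-(w x) * Real.log (p x)
          + (-(1 - w x) * Real.log (1 - ∫ y, p y * w y ∂μ))) * q x) μ :=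
        integrable_of_parts hrpm hPos (hneg_eq ▸ hnegp_fin)
      have hfp_eq : eintE μ (fun x => SCSLe μ p w x * ((q x : ℝ) : EReal))
          = ((∫ x, (-(w x) * Real.log (p x)
            + (-(1 - w x) * Real.log (1 - ∫ y, p y * w y ∂μ))) * q x ∂μ : ℝ) : EReal) :=
        (eintE_congr haefp).trans (eintE_coe_integrable hrp_int)
      have hNae : ∀ᵐ x ∂μ, ¬(0 < q x ∧ 0 < w x ∧ p x ≤ 0) := by
        filter_upwards [measure_eq_zero_iff_ae_notMem.mp hN] with x hx hc
        exact hx ((hmemN x).mpr hc)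
      obtain ⟨hcore1, hcore2⟩ := core_real μ p q w hp0 hq0 hw01 _ _ rfl rfl hA0 hA1 hB0 hB1
        hq_int hq1 hwq_int hwp_int hqq hrp_int hrq_int hNae
      constructor
      · rw [hfq_eq, hfp_eq]
        exact EReal.coe_le_coe_iff.mpr hcore1
      · rw [hfq_eq, hfp_eq, EReal.coe_eq_coe_iff]
        exact hcore2
  · have hpos_top : ∫⁻ x, epos (SCSLe μ p w x * ((q x : ℝ) : EReal)) ∂μ = ⊤ := by
      refine top_unique ?_
      have h1 : ∫⁻ x in N, epos (SCSLe μ p w x * ((q x : ℝ) : EReal)) ∂μ = ⊤ := by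
        have hconst : ∀ᵐ x ∂μ, x ∈ N →
            epos (SCSLe μ p w x * ((q x : ℝ) : EReal)) = (⊤ : ℝ≥0∞) := by
          refine Filter.Eventually.of_forall fun x hx => ?_
          obtain ⟨h1, h2, h3⟩ := (hmemN x).mp hx
          rw [scsl_top μ p w q x h1 h2 h3, epos_top]
        rw [setLIntegral_congr_fun_ae hNmeas hconst, setLIntegral_const, ENNReal.top_mul hN]
      calc (⊤ : ℝ≥0∞) = ∫⁻ x in N, epos (SCSLe μ p w x * ((q x : ℝ) : EReal)) ∂μ := h1.symm
        _ ≤ _ := setLIntegral_le_lintegral _ _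
    have htop : eintE μ (fun x => SCSLe μ p w x * ((q x : ℝ) : EReal)) = ⊤ :=
      eintE_eq_top hpos_top hnegp_fin
    constructor
    · rw [hfq_eq, htop]; exact le_top
    · rw [htop, hfq_eq]
      constructor
      · intro hc
        exact absurd hc.symm (EReal.coe_ne_top _)
      · intro h
        exact absurd (haeN_of h) hN

end
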